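/- Let G be the radius-k star with p ≥ 1 paths, where k ≥ 1 is odd. Then the differential chromatic number of G equals p·(k−1)/2 + 1. -/
import Mathlib


/-- A labeling of the vertices of a finite graph on `n` vertices: a one-to-one
assignment of the numbers `1, …, n` to the vertices. -/
def IsLabeling {V : Type*} [Fintype V] (c : V → ℕ) : Prop :=
  Function.Injective c ∧ ∀ v, c v ∈ Finset.Icc 1 (Fintype.card V)

/-- The differential value of the labeling `c` is at least `d`: every edge has
label difference at least `d`. -/
def DiffValAtLeast {V : Type*} (G : SimpleGraph V) (c : V → ℕ) (d : ℕ) : Prop :=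
  ∀ u v, G.Adj u v → d ≤ Nat.dist (c u) (c v)

/-- The differential chromatic number: the maximum, over all labelings, of the
minimum label difference over the edges. -/
noncomputable def diffChromNum {V : Type*} [Fintype V] (G : SimpleGraph V) : ℕ :=
  sSup {d : ℕ | ∃ c : V → ℕ, IsLabeling c ∧ DiffValAtLeast G c d}

/-- The spider graph with center `none` and `p` attached paths, the `i`-th path
having `ℓ i` vertices `some ⟨i, j⟩` (the vertex `some ⟨i, j⟩` is at level `j + 1`,
i.e. at distance `j + 1` from the center). -/
def spider (p : ℕ) (ℓ : Fin p → ℕ) : SimpleGraph (Option (Σ i : Fin p, Fin (ℓ i))) :=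
  SimpleGraph.fromRel (fun a b =>
    (a = none ∧ ∃ (i : Fin p) (h : 0 < ℓ i), b = some ⟨i, ⟨0, h⟩⟩) ∨
    (∃ (i : Fin p) (x y : Fin (ℓ i)), (x : ℕ) + 1 = (y : ℕ) ∧
      a = some ⟨i, x⟩ ∧ b = some ⟨i, y⟩))

/-- The number of vertices of the spider at even positive level (the vertex
`some ⟨i, j⟩` is at level `j + 1`). -/
def spiderNe (p : ℕ) (ℓ : Fin p → ℕ) : ℕ :=
  (Finset.univ.filter (fun v : Σ i : Fin p, Fin (ℓ i) => (v.2 : ℕ) % 2 = 1)).card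

/-- The number of vertices of the spider at odd level. -/
def spiderNo (p : ℕ) (ℓ : Fin p → ℕ) : ℕ :=
  (Finset.univ.filter (fun v : Σ i : Fin p, Fin (ℓ i) => (v.2 : ℕ) % 2 = 0)).card

/-! ### Auxiliary lemmas -/

lemma prod_decomp {p q q' i i' : ℕ} (hi : i < p) (hi' : i' < p)
    (h : q * p + i = q' * p + i') : q = q' ∧ i = i' := by
  have h1 : (q * p + i) % p = i := by
    rw [Nat.add_comm, Nat.add_mul_mod_self_right]; exact Nat.mod_eq_of_lt hi
  have h2 : (q' * p + i') % p = i' := by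
    rw [Nat.add_comm, Nat.add_mul_mod_self_right]; exact Nat.mod_eq_of_lt hi'
  have hii : i = i' := by rw [← h1, ← h2, h]
  subst hii
  have hq : q * p = q' * p := by omega
  exact ⟨Nat.eq_of_mul_eq_mul_right (by omega) hq, rfl⟩

lemma spider_adj_center (p k : ℕ) (i : Fin p) (j : Fin k) (hj : (j:ℕ) = 0) :
    (spider p (fun _ => k)).Adj none (some ⟨i, j⟩) := by
  rw [spider, SimpleGraph.fromRel_adj]
  refine ⟨by simp, Or.inl (Or.inl ⟨rfl, i, j.pos, ?_⟩)⟩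
  have : j = ⟨0, j.pos⟩ := Fin.ext hj
  rw [this]

lemma spider_adj_succ (p k : ℕ) (i : Fin p) (x y : Fin k) (h : (x:ℕ) + 1 = y) :
    (spider p (fun _ => k)).Adj (some ⟨i, x⟩) (some ⟨i, y⟩) := by
  rw [spider, SimpleGraph.fromRel_adj]
  refine ⟨?_, Or.inl (Or.inr ⟨i, x, y, h, rfl, rfl⟩)⟩
  intro hc
  have : x = y := by
    have := Option.some_injective _ hc
    exact eq_of_heq (Sigma.mk.inj_iff.mp this).2
  rw [this] at h
  omega

lemma spider_adj_cases {p k : ℕ} {u v : Option (Σ _ : Fin p, Fin k)}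
    (h : (spider p (fun _ => k)).Adj u v) :
    (∃ (i : Fin p) (j : Fin k), (j:ℕ) = 0 ∧
        ((u = none ∧ v = some ⟨i, j⟩) ∨ (v = none ∧ u = some ⟨i, j⟩))) ∨
    (∃ (i : Fin p) (x y : Fin k), (x:ℕ) + 1 = (y:ℕ) ∧
        ((u = some ⟨i, x⟩ ∧ v = some ⟨i, y⟩) ∨ (v = some ⟨i, x⟩ ∧ u = some ⟨i, y⟩))) := by
  rw [spider, SimpleGraph.fromRel_adj] at h
  rcases h.2 with (⟨h1, i, hi, h2⟩ | ⟨i, x, y, hxy, h1, h2⟩) |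
    (⟨h1, i, hi, h2⟩ | ⟨i, x, y, hxy, h1, h2⟩)
  · exact Or.inl ⟨i, ⟨0, hi⟩, rfl, Or.inl ⟨h1, h2⟩⟩
  · exact Or.inr ⟨i, x, y, hxy, Or.inl ⟨h1, h2⟩⟩
  · exact Or.inl ⟨i, ⟨0, hi⟩, rfl, Or.inr ⟨h1, h2⟩⟩
  · exact Or.inr ⟨i, x, y, hxy, Or.inr ⟨h1, h2⟩⟩

lemma spider_card (p m : ℕ) :
    Fintype.card (Option (Σ _ : Fin p, Fin (2*m+1))) = p * (2*m+1) + 1 := by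
  simp [Fintype.card_option, Fintype.card_sigma, Finset.sum_const, Finset.card_univ, mul_comm]

/-- the optimal labeling of the spider with `p` legs each of `2m+1` vertices -/
def spc (p m : ℕ) : Option (Σ _ : Fin p, Fin (2*m+1)) → ℕ
  | none => p*m+1
  | some ⟨i, j⟩ =>
      if (j:ℕ) % 2 = 1 then (m - 1 - (j:ℕ)/2) * p + i + 1
      else (p*m+1) + (m - (j:ℕ)/2) * p + i + 1

lemma spc_odd_le (p m : ℕ) (i : Fin p) (j : Fin (2*m+1)) (h : (j:ℕ) % 2 = 1) :
    spc p m (some ⟨i,j⟩) ≤ p * m := by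
  simp only [spc, if_pos h]
  have hb : (m - 1 - (j:ℕ)/2) * p ≤ (m-1) * p := Nat.mul_le_mul_right _ (by omega)
  have hb2 : (m-1) * p + p = m * p := by
    cases m with
    | zero => exact absurd (j.isLt) (by omega)
    | succ m' => simp [Nat.succ_sub_one, Nat.succ_mul]
  have hpm : p * m = m * p := Nat.mul_comm _ _
  have hi : (i:ℕ) < p := i.isLt
  omega

lemma spc_even_ge (p m : ℕ) (i : Fin p) (j : Fin (2*m+1)) (h : (j:ℕ) % 2 = 0) :
    p * m + 2 ≤ spc p m (some ⟨i,j⟩) := by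
  simp only [spc, if_neg (by omega : ¬ (j:ℕ) % 2 = 1)]
  omega

lemma spc_inj (p m : ℕ) : Function.Injective (spc p m) := by
  intro u v huv
  match u, v with
  | none, none => rfl
  | none, some ⟨i, j⟩ =>
    exfalso
    by_cases h : (j:ℕ) % 2 = 1
    · have := spc_odd_le p m i j h
      have hnone : spc p m none = p*m+1 := rfl
      omega
    · have := spc_even_ge p m i j (by omega)
      have hnone : spc p m none = p*m+1 := rfl
      omega
  | some ⟨i, j⟩, none =>
    exfalso
    by_cases h : (j:ℕ) % 2 = 1
    · have := spc_odd_le p m i j h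
      have hnone : spc p m none = p*m+1 := rfl
      omega
    · have := spc_even_ge p m i j (by omega)
      have hnone : spc p m none = p*m+1 := rfl
      omega
  | some ⟨i, j⟩, some ⟨i', j'⟩ =>
    have hi : (i:ℕ) < p := i.isLt
    have hi' : (i':ℕ) < p := i'.isLt
    have hj : (j:ℕ) < 2*m+1 := j.isLt
    have hj' : (j':ℕ) < 2*m+1 := j'.isLt
    have hjj : (j:ℕ) = (j':ℕ) ∧ (i:ℕ) = (i':ℕ) := by
      by_cases h1 : (j:ℕ) % 2 = 1 <;> by_cases h2 : (j':ℕ) % 2 = 1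
      · simp only [spc, if_pos h1, if_pos h2] at huv
        have := prod_decomp hi hi'
          (by omega : (m-1-(j:ℕ)/2) * p + i = (m-1-(j':ℕ)/2) * p + i')
        omega
      · exfalso
        have k1 := spc_odd_le p m i j h1
        have k2 := spc_even_ge p m i' j' (by omega)
        omega
      · exfalso
        have k1 := spc_even_ge p m i j (by omega)
        have k2 := spc_odd_le p m i' j' h2
        omega
      · simp only [spc, if_neg h1, if_neg h2] at huv
        have := prod_decomp hi hi'
          (by omega : (m-(j:ℕ)/2) * p + i = (m-(j':ℕ)/2) * p + i')
        omega
    have hii : i = i' := Fin.ext hjj.2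
    subst hii
    have : j = j' := Fin.ext hjj.1
    rw [this]

lemma spc_mem (p m : ℕ) (hp : 1 ≤ p) (v : Option (Σ _ : Fin p, Fin (2*m+1))) :
    spc p m v ∈ Finset.Icc 1 (p * (2*m+1) + 1) := by
  have hn : p * (2*m+1) = 2*(p*m) + p := by ring
  rcases v with _ | ⟨i, j⟩
  · simp only [spc, Finset.mem_Icc]; omega
  · have hi : (i:ℕ) < p := i.isLt
    simp only [Finset.mem_Icc]
    constructor
    · simp only [spc]; split <;> omega
    · by_cases h : (j:ℕ) % 2 = 1
      · have := spc_odd_le p m i j h; omega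
      · simp only [spc, if_neg h]
        have hb : (m - (j:ℕ)/2) * p ≤ m * p := Nat.mul_le_mul_right _ (by omega)
        have hpm : p * m = m * p := Nat.mul_comm _ _
        omega

lemma spc_diff (p m : ℕ) :
    DiffValAtLeast (spider p (fun _ => 2*m+1)) (spc p m) (p*m+1) := by
  have core1 : ∀ (i : Fin p) (j : Fin (2*m+1)), (j:ℕ) = 0 →
      p*m+1 ≤ Nat.dist (spc p m none) (spc p m (some ⟨i,j⟩)) := by
    intro i j hj
    have h2 : spc p m (some ⟨i,j⟩) = (p*m+1) + (m - (j:ℕ)/2) * p + i + 1 := by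
      simp only [spc, if_neg (by omega : ¬ (j:ℕ) % 2 = 1)]
    have h1 : spc p m none = p*m+1 := rfl
    have h3 : (m - (j:ℕ)/2) * p = m * p := by rw [hj]; norm_num
    have hpm : p * m = m * p := Nat.mul_comm _ _
    simp only [Nat.dist, h1, h2, h3]
    omega
  have core2 : ∀ (i : Fin p) (x y : Fin (2*m+1)), (x:ℕ) + 1 = (y:ℕ) →
      p*m+1 ≤ Nat.dist (spc p m (some ⟨i,x⟩)) (spc p m (some ⟨i,y⟩)) := by
    intro i x y hxy
    have hx : (x:ℕ) < 2*m+1 := x.isLt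
    have hy : (y:ℕ) < 2*m+1 := y.isLt
    by_cases hpar : (x:ℕ) % 2 = 1
    · -- x odd, y even
      have hu : spc p m (some ⟨i,x⟩) = (m - 1 - (x:ℕ)/2) * p + i + 1 := by
        simp only [spc, if_pos hpar]
      have hv : spc p m (some ⟨i,y⟩) = (p*m+1) + (m - (y:ℕ)/2) * p + i + 1 := by
        simp only [spc, if_neg (by omega : ¬ (y:ℕ) % 2 = 1)]
      have he : m - (y:ℕ)/2 = m - 1 - (x:ℕ)/2 := by omega
      rw [he] at hv
      simp only [Nat.dist, hu, hv]
      omega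
    · -- x even, y odd
      have hu : spc p m (some ⟨i,x⟩) = (p*m+1) + (m - (x:ℕ)/2) * p + i + 1 := by
        simp only [spc, if_neg (by omega : ¬ (x:ℕ) % 2 = 1)]
      have hv : spc p m (some ⟨i,y⟩) = (m - 1 - (y:ℕ)/2) * p + i + 1 := by
        simp only [spc, if_pos (by omega : (y:ℕ) % 2 = 1)]
      have he1 : m - (x:ℕ)/2 = (m - 1 - (y:ℕ)/2) + 1 := by omega
      rw [he1, add_mul, one_mul] at hu
      simp only [Nat.dist, hu, hv]
      omega
  intro u v hadj
  rcases spider_adj_cases hadj with ⟨i, j, hj, (⟨h1, h2⟩ | ⟨h1, h2⟩)⟩ |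
    ⟨i, x, y, hxy, (⟨h1, h2⟩ | ⟨h1, h2⟩)⟩
  · rw [h1, h2]; exact core1 i j hj
  · rw [h1, h2, Nat.dist_comm]; exact core1 i j hj
  · rw [h1, h2]; exact core2 i x y hxy
  · rw [h1, h2, Nat.dist_comm]; exact core2 i x y hxy

lemma dist_le_of_mem_Icc {x y s a : ℕ} (hx : x ∈ Finset.Icc s (s+a))
    (hy : y ∈ Finset.Icc s (s+a)) : Nat.dist x y ≤ a := by
  simp only [Finset.mem_Icc] at hx hy
  simp only [Nat.dist]
  omega

lemma spider_upper (p m : ℕ) (hp : 1 ≤ p) (c : Option (Σ _ : Fin p, Fin (2*m+1)) → ℕ)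
    (hlab : IsLabeling c)
    (hd : DiffValAtLeast (spider p (fun _ => 2*m+1)) c (p*m+2)) : False := by
  have hn : p * (2*m+1) + 1 = 2*(p*m) + p + 1 := by ring
  set n := p * (2*m+1) + 1 with hndef
  have hmem : ∀ v, c v ∈ Finset.Icc 1 n := by
    intro v
    have := hlab.2 v
    rwa [spider_card] at this
  have hinj := hlab.1
  have himg : Finset.univ.image c = Finset.Icc 1 n := by
    apply Finset.eq_of_subset_of_card_le
    · intro x hx
      rcases Finset.mem_image.mp hx with ⟨v, _, rfl⟩
      exact hmem v
    · rw [Nat.card_Icc, Finset.card_image_of_injective _ hinj, Finset.card_univ, spider_card]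
      omega
  have hsurj : ∀ x, 1 ≤ x → x ≤ n → ∃ v, c v = x := by
    intro x h1 h2
    have : x ∈ Finset.univ.image c := by
      rw [himg]; exact Finset.mem_Icc.mpr ⟨h1, h2⟩
    rcases Finset.mem_image.mp this with ⟨v, _, hv⟩
    exact ⟨v, hv⟩
  set γ := c none with hγdef
  have hγ : 1 ≤ γ ∧ γ ≤ n := Finset.mem_Icc.mp (hmem none)
  set a := p*m+1 with hadef
  set s := min γ (n - a) with hsdef
  have hs1 : 1 ≤ s := by omega
  have hs2 : s + a ≤ n := by omega
  have hγs : s ≤ γ ∧ γ ≤ s + a := by omega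
  set W := Finset.univ.filter (fun v => c v ∈ Finset.Icc s (s+a)) with hWdef
  have hWd : ∀ u v, u ∈ W → v ∈ W → Nat.dist (c u) (c v) ≤ a := by
    intro u v hu hv
    rw [hWdef, Finset.mem_filter] at hu hv
    exact dist_le_of_mem_Icc hu.2 hv.2
  have hnoneW : none ∈ W := by
    rw [hWdef, Finset.mem_filter]
    exact ⟨Finset.mem_univ _, Finset.mem_Icc.mpr ⟨hγs.1, hγs.2⟩⟩
  have hW1 : a + 1 ≤ W.card := by
    have hsurjOn : Set.SurjOn c ↑W ↑(Finset.Icc s (s+a)) := by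
      intro x hx
      simp only [Finset.coe_Icc, Set.mem_Icc] at hx
      rcases hsurj x (by omega) (by omega) with ⟨v, hv⟩
      refine ⟨v, ?_, hv⟩
      simp only [hWdef, Finset.coe_filter, Set.mem_setOf_eq]
      exact ⟨Finset.mem_univ _, by rw [hv]; exact Finset.mem_Icc.mpr ⟨hx.1, hx.2⟩⟩
    have := Finset.card_le_card_of_surjOn c hsurjOn
    rw [Nat.card_Icc] at this
    omega
  have hkey : ∀ (i : Fin p) (j : Fin (2*m+1)), some ⟨i,j⟩ ∈ W → 1 ≤ (j:ℕ) := by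
    intro i j hjW
    by_contra hc
    have hj0 : (j:ℕ) = 0 := by omega
    have hadj := spider_adj_center p (2*m+1) i j hj0
    have := hd none (some ⟨i,j⟩) hadj
    have := hWd none (some ⟨i,j⟩) hnoneW hjW
    omega
  have hW2 : W.card ≤ p*m+1 := by
    set T : Finset (Option (Fin p × ℕ)) :=
      insert none (((Finset.univ : Finset (Fin p)) ×ˢ Finset.range m).image (fun x => some x))
      with hTdef
    set f : Option (Σ _ : Fin p, Fin (2*m+1)) → Option (Fin p × ℕ) :=
      fun v => match v with
        | none => none
        | some ⟨i, j⟩ => some (i, ((j:ℕ)-1)/2) with hfdef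
    have hmaps : ∀ v ∈ W, f v ∈ T := by
      intro v hv
      match v with
      | none => exact Finset.mem_insert_self _ _
      | some ⟨i, j⟩ =>
        have h1 := hkey i j hv
        have h2 : (j:ℕ) < 2*m+1 := j.isLt
        apply Finset.mem_insert_of_mem
        apply Finset.mem_image_of_mem
        rw [Finset.mem_product]
        exact ⟨Finset.mem_univ _, Finset.mem_range.mpr (by omega)⟩
    have hinjOn : Set.InjOn f ↑W := by
      intro u hu v hv huv
      simp only [Finset.mem_coe] at hu hv
      match u, v with
      | none, none => rfl
      | none, some ⟨i, j⟩ => simp [hfdef] at huv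
      | some ⟨i, j⟩, none => simp [hfdef] at huv
      | some ⟨i, j⟩, some ⟨i', j'⟩ =>
        simp only [hfdef, Option.some.injEq, Prod.mk.injEq] at huv
        obtain ⟨hii, hjj⟩ := huv
        subst hii
        have h1 := hkey i j hu
        have h1' := hkey i j' hv
        have h2 : (j:ℕ) < 2*m+1 := j.isLt
        have h2' : (j':ℕ) < 2*m+1 := j'.isLt
        by_cases hje : (j:ℕ) = (j':ℕ)
        · have : j = j' := Fin.ext hje
          rw [this]
        · exfalso
          have hsucc : (j:ℕ) + 1 = (j':ℕ) ∨ (j':ℕ) + 1 = (j:ℕ) := by omega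
          rcases hsucc with h | h
          · have hadj := spider_adj_succ p (2*m+1) i j j' h
            have := hd _ _ hadj
            have := hWd _ _ hu hv
            omega
          · have hadj := spider_adj_succ p (2*m+1) i j' j h
            have := hd _ _ hadj
            have := hWd _ _ hv hu
            omega
    have hcardT : T.card = p*m+1 := by
      rw [hTdef, Finset.card_insert_of_notMem (by simp),
        Finset.card_image_of_injective _ (Option.some_injective _),
        Finset.card_product, Finset.card_univ, Fintype.card_fin, Finset.card_range]
    have := Finset.card_le_card_of_injOn f hmaps hinjOn
    omega
  omega

/-- The radius-`k` star with `p ≥ 1` paths (each attached path having exactly `k`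
vertices), where `k ≥ 1` is odd, has differential chromatic number `p·(k−1)/2 + 1`. -/
theorem stmt_11 (p k : ℕ) (hp : 1 ≤ p) (hk : 1 ≤ k) (hko : Odd k) :
    diffChromNum (spider p (fun _ => k)) = p * (k - 1) / 2 + 1 := by
  obtain ⟨m, hm⟩ := hko
  subst hm
  have hrhs : p * (2*m+1 - 1) / 2 + 1 = p*m+1 := by
    have h1 : 2*m+1 - 1 = 2*m := by omega
    rw [h1, show p * (2*m) = 2 * (p*m) by ring, Nat.mul_div_cancel_left _ (by norm_num)]
  rw [hrhs]
  have hset : {d : ℕ | ∃ c : Option (Σ i : Fin p, Fin ((fun _ => 2*m+1) i)) → ℕ,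
      IsLabeling c ∧ DiffValAtLeast (spider p (fun _ => 2*m+1)) c d} = Set.Iic (p*m+1) := by
    ext d
    simp only [Set.mem_setOf_eq, Set.mem_Iic]
    constructor
    · rintro ⟨c, hc, hdv⟩
      by_contra hgt
      push_neg at hgt
      exact spider_upper p m hp c hc (fun u v h => le_trans (by omega) (hdv u v h))
    · intro hle
      refine ⟨spc p m, ⟨spc_inj p m, ?_⟩, fun u v h => le_trans hle (spc_diff p m u v h)⟩
      intro v
      have := spc_mem p m hp v
      rwa [← spider_card p m] at this
  rw [diffChromNum, hset]
  exact csSup_Iic
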